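/- Let d1, d2 ≥ 1 and let l : ℝ^{d1} × ℝ^{d2} × 𝒳 → ℝ be such that for each (ψ, γ), the function x ↦ exp(l(ψ, γ; x)) is a probability density with respect to a σ-finite measure on a measurable space 𝒳, and l is twice continuously differentiable in (ψ, γ). Let γ̄ : ℝ^{d1} × ℝ^{d2} → ℝ^{d2} be twice continuously differentiable such that for every ψ the Jacobian matrix (∂γ̄_s/∂λ_j)_{s,j=1,…,d2} is invertible, and set l̄(ψ, λ; x) = l(ψ, γ̄(ψ, λ); x). Assume that for all parameter values the γ-scores have zero mean, E_{ψ,γ̄(ψ,λ)}[∂l/∂γ_r(ψ, γ̄(ψ,λ); ·)] = 0 for all r = 1,…,d2, and that all first and second partial derivatives of l and l̄ in the parameters are integrable under the corresponding density. Then at any fixed (ψ, λ) with γ = γ̄(ψ, λ), the orthogonality condition E_{ψ,γ}[∂²l̄/∂ψ_i ∂λ_j] = 0 for all i = 1,…,d1 and j = 1,…,d2 holds if and only if ∑_{r=1}^{d2} I_{γ_r,γ_s}(ψ,γ) · ∂γ̄_r/∂ψ_i(ψ,λ) = −I_{ψ_i,γ_s}(ψ,γ) for all i = 1,…,d1 and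 s = 1,…,d2. -/

import Mathlib

open MeasureTheory

/-- Partial derivative of `F(ψ, γ)` in the `i`-th coordinate of the first argument. -/
noncomputable def pd1 {d1 d2 : ℕ} (F : (Fin d1 → ℝ) → (Fin d2 → ℝ) → ℝ)
    (i : Fin d1) (ψ : Fin d1 → ℝ) (γ : Fin d2 → ℝ) : ℝ :=
  deriv (fun t => F (Function.update ψ i t) γ) (ψ i)

/-- Partial derivative of `F(ψ, γ)` in the `s`-th coordinate of the second argument. -/
noncomputable def pd2 {d1 d2 : ℕ} (F : (Fin d1 → ℝ) → (Fin d2 → ℝ) → ℝ)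
    (s : Fin d2) (ψ : Fin d1 → ℝ) (γ : Fin d2 → ℝ) : ℝ :=
  deriv (fun t => F ψ (Function.update γ s t)) (γ s)

lemma pd1_eq {d1 d2 : ℕ} {F : (Fin d1 → ℝ) → (Fin d2 → ℝ) → ℝ} {ψ : Fin d1 → ℝ}
    {γ : Fin d2 → ℝ}
    (h : DifferentiableAt ℝ (fun q : (Fin d1 → ℝ) × (Fin d2 → ℝ) => F q.1 q.2) (ψ, γ))
    (i : Fin d1) :
    pd1 F i ψ γ = fderiv ℝ (fun q : (Fin d1 → ℝ) × (Fin d2 → ℝ) => F q.1 q.2) (ψ, γ)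
      ((Pi.single i 1 : Fin d1 → ℝ), (0 : Fin d2 → ℝ)) := by
  have hcurve : HasDerivAt (fun t => ((Function.update ψ i t : Fin d1 → ℝ), γ))
      ((Pi.single i 1 : Fin d1 → ℝ), (0 : Fin d2 → ℝ)) (ψ i) :=
    HasDerivAt.prodMk (hasDerivAt_update ψ i (ψ i)) (hasDerivAt_const _ _)
  have h0 : ((Function.update ψ i (ψ i) : Fin d1 → ℝ), γ) = (ψ, γ) := by
    rw [Function.update_eq_self]
  have h2 := h.hasFDerivAt
  rw [← h0] at h2
  have key := h2.comp_hasDerivAt (ψ i) hcurve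
  have := key.deriv
  rw [h0] at this
  exact this

lemma pd2_eq {d1 d2 : ℕ} {F : (Fin d1 → ℝ) → (Fin d2 → ℝ) → ℝ} {ψ : Fin d1 → ℝ}
    {γ : Fin d2 → ℝ}
    (h : DifferentiableAt ℝ (fun q : (Fin d1 → ℝ) × (Fin d2 → ℝ) => F q.1 q.2) (ψ, γ))
    (s : Fin d2) :
    pd2 F s ψ γ = fderiv ℝ (fun q : (Fin d1 → ℝ) × (Fin d2 → ℝ) => F q.1 q.2) (ψ, γ)
      ((0 : Fin d1 → ℝ), (Pi.single s 1 : Fin d2 → ℝ)) := by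
  have hcurve : HasDerivAt (fun t => (ψ, (Function.update γ s t : Fin d2 → ℝ)))
      ((0 : Fin d1 → ℝ), (Pi.single s 1 : Fin d2 → ℝ)) (γ s) :=
    HasDerivAt.prodMk (hasDerivAt_const _ _) (hasDerivAt_update γ s (γ s))
  have h0 : (ψ, (Function.update γ s (γ s) : Fin d2 → ℝ)) = (ψ, γ) := by
    rw [Function.update_eq_self]
  have h2 := h.hasFDerivAt
  rw [← h0] at h2
  have key := h2.comp_hasDerivAt (γ s) hcurve
  have := key.deriv
  rw [h0] at this
  exact this

section helpers
variable {E F : Type*} [NormedAddCommGroup E] [NormedSpace ℝ E]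
  [NormedAddCommGroup F] [NormedSpace ℝ F]

lemma fderiv_apply_swap {f : E → F} {p : E} (h : DifferentiableAt ℝ (fderiv ℝ f) p)
    (w u : E) :
    fderiv ℝ (fun q => fderiv ℝ f q w) p u = fderiv ℝ (fderiv ℝ f) p u w := by
  have h1 : HasFDerivAt (fun q => fderiv ℝ f q w)
      ((ContinuousLinearMap.apply ℝ F w).comp (fderiv ℝ (fderiv ℝ f) p)) p :=
    (ContinuousLinearMap.apply ℝ F w).hasFDerivAt.comp p h.hasFDerivAt
  rw [h1.fderiv]
  rfl

lemma diffAt_fderiv_apply {f : E → F} {p : E} (h : DifferentiableAt ℝ (fderiv ℝ f) p)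
    (w : E) : DifferentiableAt ℝ (fun q => fderiv ℝ f q w) p :=
  ((ContinuousLinearMap.apply ℝ F w).hasFDerivAt.comp p h.hasFDerivAt).differentiableAt

lemma second_deriv_comp {f : F → ℝ} {g : E → F} (hf : ContDiff ℝ 2 f)
    (hg : ContDiff ℝ 2 g) (p u w : E) :
    fderiv ℝ (fderiv ℝ (fun q => f (g q))) p u w
      = fderiv ℝ (fderiv ℝ f) (g p) (fderiv ℝ g p u) (fderiv ℝ g p w)
        + fderiv ℝ f (g p) (fderiv ℝ (fderiv ℝ g) p u w) := by
  have hfd : Differentiable ℝ f := hf.differentiable two_ne_zero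
  have hgd : Differentiable ℝ g := hg.differentiable two_ne_zero
  have hf1 : ContDiff ℝ 1 (fderiv ℝ f) := hf.fderiv_right (le_refl 2)
  have hg1 : ContDiff ℝ 1 (fderiv ℝ g) := hg.fderiv_right (le_refl 2)
  have heq : fderiv ℝ (fun q => f (g q))
      = fun q => (fderiv ℝ f (g q)).comp (fderiv ℝ g q) := by
    funext q
    exact fderiv_comp q (hfd (g q)) (hgd q)
  have hc : HasFDerivAt (fun q => fderiv ℝ f (g q))
      ((fderiv ℝ (fderiv ℝ f) (g p)).comp (fderiv ℝ g p)) p :=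
    ((hf1.differentiable one_ne_zero (g p)).hasFDerivAt).comp p (hgd p).hasFDerivAt
  have hd : HasFDerivAt (fun q => fderiv ℝ g q) (fderiv ℝ (fderiv ℝ g) p) p :=
    (hg1.differentiable one_ne_zero p).hasFDerivAt
  have hcomp := hc.clm_comp hd
  rw [heq, hcomp.fderiv]
  simp [ContinuousLinearMap.add_apply, ContinuousLinearMap.comp_apply,
    ContinuousLinearMap.flip_apply]
  ring

end helpers

lemma pd_mixed_12 {d1 d2 : ℕ} {F : (Fin d1 → ℝ) → (Fin d2 → ℝ) → ℝ}
    (hF : ContDiff ℝ 2 (fun q : (Fin d1 → ℝ) × (Fin d2 → ℝ) => F q.1 q.2))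
    (ψ : Fin d1 → ℝ) (γ : Fin d2 → ℝ) (i : Fin d1) (s : Fin d2) :
    pd1 (fun a b => pd2 F s a b) i ψ γ
      = fderiv ℝ (fderiv ℝ (fun q : (Fin d1 → ℝ) × (Fin d2 → ℝ) => F q.1 q.2)) (ψ, γ)
          ((Pi.single i 1 : Fin d1 → ℝ), (0 : Fin d2 → ℝ))
          ((0 : Fin d1 → ℝ), (Pi.single s 1 : Fin d2 → ℝ)) := by
  have hF1 : ContDiff ℝ 1 (fderiv ℝ (fun q : (Fin d1 → ℝ) × (Fin d2 → ℝ) => F q.1 q.2)) :=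
    hF.fderiv_right (le_refl 2)
  have hpd2 : (fun a b => pd2 F s a b)
      = fun (a : Fin d1 → ℝ) (b : Fin d2 → ℝ) =>
          fderiv ℝ (fun q : (Fin d1 → ℝ) × (Fin d2 → ℝ) => F q.1 q.2) (a, b)
            ((0 : Fin d1 → ℝ), (Pi.single s 1 : Fin d2 → ℝ)) := by
    funext a b
    exact pd2_eq ((hF.differentiable two_ne_zero) (a, b)) s
  rw [hpd2]
  rw [pd1_eq (diffAt_fderiv_apply (hF1.differentiable one_ne_zero (ψ, γ)) _) i]
  exact fderiv_apply_swap (hF1.differentiable one_ne_zero (ψ, γ)) _ _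

lemma pd_mixed_22 {d1 d2 : ℕ} {F : (Fin d1 → ℝ) → (Fin d2 → ℝ) → ℝ}
    (hF : ContDiff ℝ 2 (fun q : (Fin d1 → ℝ) × (Fin d2 → ℝ) => F q.1 q.2))
    (ψ : Fin d1 → ℝ) (γ : Fin d2 → ℝ) (r : Fin d2) (s : Fin d2) :
    pd2 (fun a b => pd2 F s a b) r ψ γ
      = fderiv ℝ (fderiv ℝ (fun q : (Fin d1 → ℝ) × (Fin d2 → ℝ) => F q.1 q.2)) (ψ, γ)
          ((0 : Fin d1 → ℝ), (Pi.single r 1 : Fin d2 → ℝ))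
          ((0 : Fin d1 → ℝ), (Pi.single s 1 : Fin d2 → ℝ)) := by
  have hF1 : ContDiff ℝ 1 (fderiv ℝ (fun q : (Fin d1 → ℝ) × (Fin d2 → ℝ) => F q.1 q.2)) :=
    hF.fderiv_right (le_refl 2)
  have hpd2 : (fun a b => pd2 F s a b)
      = fun (a : Fin d1 → ℝ) (b : Fin d2 → ℝ) =>
          fderiv ℝ (fun q : (Fin d1 → ℝ) × (Fin d2 → ℝ) => F q.1 q.2) (a, b)
            ((0 : Fin d1 → ℝ), (Pi.single s 1 : Fin d2 → ℝ)) := by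
    funext a b
    exact pd2_eq ((hF.differentiable two_ne_zero) (a, b)) s
  rw [hpd2]
  rw [pd2_eq (diffAt_fderiv_apply (hF1.differentiable one_ne_zero (ψ, γ)) _) r]
  exact fderiv_apply_swap (hF1.differentiable one_ne_zero (ψ, γ)) _ _

lemma vec_expand {d1 d2 : ℕ} (v : Fin d2 → ℝ) :
    (((0 : Fin d1 → ℝ), v) : (Fin d1 → ℝ) × (Fin d2 → ℝ))
      = ∑ s, v s • (((0 : Fin d1 → ℝ), (Pi.single s 1 : Fin d2 → ℝ)) :
          (Fin d1 → ℝ) × (Fin d2 → ℝ)) := by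
  rw [Prod.ext_iff]
  constructor
  · rw [Prod.fst_sum]
    simp
  · rw [Prod.snd_sum]
    simp only [Prod.smul_mk, Prod.snd]
    funext t
    rw [Finset.sum_apply]
    simp [Pi.single_apply]

lemma vec_expand1 {d1 d2 : ℕ} (i : Fin d1) (v : Fin d2 → ℝ) :
    (((Pi.single i 1 : Fin d1 → ℝ), v) : (Fin d1 → ℝ) × (Fin d2 → ℝ))
      = ((Pi.single i 1 : Fin d1 → ℝ), (0 : Fin d2 → ℝ))
        + ∑ r, v r • (((0 : Fin d1 → ℝ), (Pi.single r 1 : Fin d2 → ℝ)) :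
            (Fin d1 → ℝ) × (Fin d2 → ℝ)) := by
  rw [← vec_expand]
  simp

section gm
variable {d1 d2 : ℕ} {γb : (Fin d1 → ℝ) → (Fin d2 → ℝ) → (Fin d2 → ℝ)}

lemma gm_fderiv (hγb : ContDiff ℝ 2 (fun q : (Fin d1 → ℝ) × (Fin d2 → ℝ) => γb q.1 q.2))
    (q v : (Fin d1 → ℝ) × (Fin d2 → ℝ)) :
    fderiv ℝ (fun q : (Fin d1 → ℝ) × (Fin d2 → ℝ) => (q.1, γb q.1 q.2)) q v
      = (v.1, fderiv ℝ (fun q : (Fin d1 → ℝ) × (Fin d2 → ℝ) => γb q.1 q.2) q v) := by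
  have h : HasFDerivAt (fun q : (Fin d1 → ℝ) × (Fin d2 → ℝ) => (q.1, γb q.1 q.2))
      ((ContinuousLinearMap.fst ℝ (Fin d1 → ℝ) (Fin d2 → ℝ)).prod
        (fderiv ℝ (fun q : (Fin d1 → ℝ) × (Fin d2 → ℝ) => γb q.1 q.2) q)) q :=
    HasFDerivAt.prodMk (hasFDerivAt_fst) ((hγb.differentiable two_ne_zero q).hasFDerivAt)
  rw [h.fderiv]
  rfl

lemma gm_fderiv2 (hγb : ContDiff ℝ 2 (fun q : (Fin d1 → ℝ) × (Fin d2 → ℝ) => γb q.1 q.2))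
    (p u w : (Fin d1 → ℝ) × (Fin d2 → ℝ)) :
    fderiv ℝ (fderiv ℝ (fun q : (Fin d1 → ℝ) × (Fin d2 → ℝ) => (q.1, γb q.1 q.2))) p u w
      = ((0 : Fin d1 → ℝ),
          fderiv ℝ (fderiv ℝ (fun q : (Fin d1 → ℝ) × (Fin d2 → ℝ) => γb q.1 q.2)) p u w) := by
  have hgm : ContDiff ℝ 2 (fun q : (Fin d1 → ℝ) × (Fin d2 → ℝ) => (q.1, γb q.1 q.2)) :=
    ContDiff.prodMk contDiff_fst hγb
  have hgm1 : ContDiff ℝ 1 (fderiv ℝ (fun q : (Fin d1 → ℝ) × (Fin d2 → ℝ) => (q.1, γb q.1 q.2))) :=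
    hgm.fderiv_right (le_refl 2)
  have hG1 : ContDiff ℝ 1 (fderiv ℝ (fun q : (Fin d1 → ℝ) × (Fin d2 → ℝ) => γb q.1 q.2)) :=
    hγb.fderiv_right (le_refl 2)
  rw [← fderiv_apply_swap (hgm1.differentiable one_ne_zero p) w u]
  have heq : (fun q : (Fin d1 → ℝ) × (Fin d2 → ℝ) =>
      fderiv ℝ (fun q : (Fin d1 → ℝ) × (Fin d2 → ℝ) => (q.1, γb q.1 q.2)) q w)
      = fun q => (w.1, fderiv ℝ (fun q : (Fin d1 → ℝ) × (Fin d2 → ℝ) => γb q.1 q.2) q w) := by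
    funext q
    exact gm_fderiv hγb q w
  rw [heq]
  have h2 : HasFDerivAt
      (fun q : (Fin d1 → ℝ) × (Fin d2 → ℝ) =>
        fderiv ℝ (fun q : (Fin d1 → ℝ) × (Fin d2 → ℝ) => γb q.1 q.2) q w)
      ((ContinuousLinearMap.apply ℝ (Fin d2 → ℝ) w).comp
        (fderiv ℝ (fderiv ℝ (fun q : (Fin d1 → ℝ) × (Fin d2 → ℝ) => γb q.1 q.2)) p)) p :=
    (ContinuousLinearMap.apply ℝ (Fin d2 → ℝ) w).hasFDerivAt.comp p
      (hG1.differentiable one_ne_zero p).hasFDerivAt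
  have hpair := HasFDerivAt.prodMk (hasFDerivAt_const w.1 p) h2
  rw [hpair.fderiv]
  rfl

end gm

lemma comp_fderiv {d1 d2 : ℕ} {γb : (Fin d1 → ℝ) → (Fin d2 → ℝ) → (Fin d2 → ℝ)}
    (hγb : ContDiff ℝ 2 (fun q : (Fin d1 → ℝ) × (Fin d2 → ℝ) => γb q.1 q.2))
    (p v : (Fin d1 → ℝ) × (Fin d2 → ℝ)) (r : Fin d2) :
    fderiv ℝ (fun q : (Fin d1 → ℝ) × (Fin d2 → ℝ) => γb q.1 q.2 r) p v
      = fderiv ℝ (fun q : (Fin d1 → ℝ) × (Fin d2 → ℝ) => γb q.1 q.2) p v r := by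
  have h : HasFDerivAt (fun q : (Fin d1 → ℝ) × (Fin d2 → ℝ) => γb q.1 q.2 r)
      ((ContinuousLinearMap.proj (R := ℝ) (φ := fun _ : Fin d2 => ℝ) r).comp
        (fderiv ℝ (fun q : (Fin d1 → ℝ) × (Fin d2 → ℝ) => γb q.1 q.2) p)) p :=
    (ContinuousLinearMap.proj (R := ℝ) (φ := fun _ : Fin d2 => ℝ) r).hasFDerivAt.comp p
      (hγb.differentiable two_ne_zero p).hasFDerivAt
  rw [h.fderiv]
  rfl

lemma diff_comp_proj {d1 d2 : ℕ} {γb : (Fin d1 → ℝ) → (Fin d2 → ℝ) → (Fin d2 → ℝ)}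
    (hγb : ContDiff ℝ 2 (fun q : (Fin d1 → ℝ) × (Fin d2 → ℝ) => γb q.1 q.2))
    (p : (Fin d1 → ℝ) × (Fin d2 → ℝ)) (r : Fin d2) :
    DifferentiableAt ℝ (fun q : (Fin d1 → ℝ) × (Fin d2 → ℝ) => γb q.1 q.2 r) p :=
  ((ContinuousLinearMap.proj (R := ℝ) (φ := fun _ : Fin d2 => ℝ) r).hasFDerivAt.comp p
    (hγb.differentiable two_ne_zero p).hasFDerivAt).differentiableAt

lemma bilin_expand {d1 d2 : ℕ}
    (B : ((Fin d1 → ℝ) × (Fin d2 → ℝ)) →L[ℝ] ((Fin d1 → ℝ) × (Fin d2 → ℝ)) →L[ℝ] ℝ)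
    (i : Fin d1) (c v : Fin d2 → ℝ) :
    B ((Pi.single i 1 : Fin d1 → ℝ), c) ((0 : Fin d1 → ℝ), v)
      = ∑ s, v s * (B ((Pi.single i 1 : Fin d1 → ℝ), (0 : Fin d2 → ℝ))
            ((0 : Fin d1 → ℝ), (Pi.single s 1 : Fin d2 → ℝ))
          + ∑ r, c r * B ((0 : Fin d1 → ℝ), (Pi.single r 1 : Fin d2 → ℝ))
              ((0 : Fin d1 → ℝ), (Pi.single s 1 : Fin d2 → ℝ))) := by
  rw [vec_expand1 i c, vec_expand (d1 := d1) v]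
  simp only [map_add, map_sum, _root_.map_smul, ContinuousLinearMap.add_apply,
    ContinuousLinearMap.sum_apply, ContinuousLinearMap.smul_apply, smul_eq_mul]

lemma lin_expand {d1 d2 : ℕ}
    (L : ((Fin d1 → ℝ) × (Fin d2 → ℝ)) →L[ℝ] ℝ) (v : Fin d2 → ℝ) :
    L ((0 : Fin d1 → ℝ), v)
      = ∑ s, v s * L ((0 : Fin d1 → ℝ), (Pi.single s 1 : Fin d2 → ℝ)) := by
  rw [vec_expand (d1 := d1) v]
  simp only [map_sum, _root_.map_smul, smul_eq_mul]

lemma pointwise {d1 d2 : ℕ} {𝒳 : Type*}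
    (l : (Fin d1 → ℝ) → (Fin d2 → ℝ) → 𝒳 → ℝ)
    (γb : (Fin d1 → ℝ) → (Fin d2 → ℝ) → (Fin d2 → ℝ))
    (hγb : ContDiff ℝ 2 (fun q : (Fin d1 → ℝ) × (Fin d2 → ℝ) => γb q.1 q.2))
    (x : 𝒳) (hl : ContDiff ℝ 2 (fun q : (Fin d1 → ℝ) × (Fin d2 → ℝ) => l q.1 q.2 x))
    (ψ : Fin d1 → ℝ) (lam : Fin d2 → ℝ) (i : Fin d1) (j : Fin d2) :
    pd1 (fun a b => pd2 (fun c e => l c (γb c e) x) j a b) i ψ lam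
      = (∑ s, (deriv (fun t => γb ψ (Function.update lam j t) s) (lam j)) *
          (pd1 (fun a b => pd2 (fun c e => l c e x) s a b) i ψ (γb ψ lam)
            + ∑ r, (pd1 (fun a b => γb a b r) i ψ lam) *
                pd2 (fun a b => pd2 (fun c e => l c e x) s a b) r ψ (γb ψ lam)))
        + ∑ s, (fderiv ℝ (fderiv ℝ (fun q : (Fin d1 → ℝ) × (Fin d2 → ℝ) => γb q.1 q.2))
              (ψ, lam) ((Pi.single i 1 : Fin d1 → ℝ), (0 : Fin d2 → ℝ))
              ((0 : Fin d1 → ℝ), (Pi.single j 1 : Fin d2 → ℝ)) s) *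
            pd2 (fun a b => l a b x) s ψ (γb ψ lam) := by
  have hgm : ContDiff ℝ 2
      (fun q : (Fin d1 → ℝ) × (Fin d2 → ℝ) => ((q.1 : Fin d1 → ℝ), γb q.1 q.2)) :=
    ContDiff.prodMk contDiff_fst hγb
  have hfg : ContDiff ℝ 2 (fun q : (Fin d1 → ℝ) × (Fin d2 → ℝ) => l q.1 (γb q.1 q.2) x) :=
    hl.comp hgm
  -- step 1 : the mixed pd of the reparameterized log-likelihood as a second fderiv
  have e1 : pd1 (fun a b => pd2 (fun c e => l c (γb c e) x) j a b) i ψ lam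
      = fderiv ℝ (fderiv ℝ (fun q : (Fin d1 → ℝ) × (Fin d2 → ℝ) => l q.1 (γb q.1 q.2) x))
          (ψ, lam) ((Pi.single i 1 : Fin d1 → ℝ), (0 : Fin d2 → ℝ))
          ((0 : Fin d1 → ℝ), (Pi.single j 1 : Fin d2 → ℝ)) :=
    pd_mixed_12 hfg ψ lam i j
  -- step 2 : the chain rule for second derivatives
  have e2 : fderiv ℝ (fderiv ℝ (fun q : (Fin d1 → ℝ) × (Fin d2 → ℝ) => l q.1 (γb q.1 q.2) x))
          (ψ, lam) ((Pi.single i 1 : Fin d1 → ℝ), (0 : Fin d2 → ℝ))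
          ((0 : Fin d1 → ℝ), (Pi.single j 1 : Fin d2 → ℝ))
      = fderiv ℝ (fderiv ℝ (fun q : (Fin d1 → ℝ) × (Fin d2 → ℝ) => l q.1 q.2 x))
          (ψ, γb ψ lam)
          (fderiv ℝ (fun q : (Fin d1 → ℝ) × (Fin d2 → ℝ) => ((q.1 : Fin d1 → ℝ), γb q.1 q.2))
            (ψ, lam) ((Pi.single i 1 : Fin d1 → ℝ), (0 : Fin d2 → ℝ)))
          (fderiv ℝ (fun q : (Fin d1 → ℝ) × (Fin d2 → ℝ) => ((q.1 : Fin d1 → ℝ), γb q.1 q.2))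
            (ψ, lam) ((0 : Fin d1 → ℝ), (Pi.single j 1 : Fin d2 → ℝ)))
        + fderiv ℝ (fun q : (Fin d1 → ℝ) × (Fin d2 → ℝ) => l q.1 q.2 x) (ψ, γb ψ lam)
          (fderiv ℝ (fderiv ℝ
              (fun q : (Fin d1 → ℝ) × (Fin d2 → ℝ) => ((q.1 : Fin d1 → ℝ), γb q.1 q.2)))
            (ψ, lam) ((Pi.single i 1 : Fin d1 → ℝ), (0 : Fin d2 → ℝ))
            ((0 : Fin d1 → ℝ), (Pi.single j 1 : Fin d2 → ℝ))) :=
    second_deriv_comp hl hgm (ψ, lam) _ _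
  -- step 3 : first derivatives of the reparameterization map
  have e3 : fderiv ℝ (fun q : (Fin d1 → ℝ) × (Fin d2 → ℝ) => ((q.1 : Fin d1 → ℝ), γb q.1 q.2))
        (ψ, lam) ((Pi.single i 1 : Fin d1 → ℝ), (0 : Fin d2 → ℝ))
      = ((Pi.single i 1 : Fin d1 → ℝ),
          fderiv ℝ (fun q : (Fin d1 → ℝ) × (Fin d2 → ℝ) => γb q.1 q.2) (ψ, lam)
            ((Pi.single i 1 : Fin d1 → ℝ), (0 : Fin d2 → ℝ))) :=
    gm_fderiv hγb (ψ, lam) _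
  have e4 : fderiv ℝ (fun q : (Fin d1 → ℝ) × (Fin d2 → ℝ) => ((q.1 : Fin d1 → ℝ), γb q.1 q.2))
        (ψ, lam) ((0 : Fin d1 → ℝ), (Pi.single j 1 : Fin d2 → ℝ))
      = ((0 : Fin d1 → ℝ),
          fderiv ℝ (fun q : (Fin d1 → ℝ) × (Fin d2 → ℝ) => γb q.1 q.2) (ψ, lam)
            ((0 : Fin d1 → ℝ), (Pi.single j 1 : Fin d2 → ℝ))) :=
    gm_fderiv hγb (ψ, lam) _
  have e5 : fderiv ℝ (fderiv ℝ
        (fun q : (Fin d1 → ℝ) × (Fin d2 → ℝ) => ((q.1 : Fin d1 → ℝ), γb q.1 q.2)))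
        (ψ, lam) ((Pi.single i 1 : Fin d1 → ℝ), (0 : Fin d2 → ℝ))
        ((0 : Fin d1 → ℝ), (Pi.single j 1 : Fin d2 → ℝ))
      = ((0 : Fin d1 → ℝ),
          fderiv ℝ (fderiv ℝ (fun q : (Fin d1 → ℝ) × (Fin d2 → ℝ) => γb q.1 q.2)) (ψ, lam)
            ((Pi.single i 1 : Fin d1 → ℝ), (0 : Fin d2 → ℝ))
            ((0 : Fin d1 → ℝ), (Pi.single j 1 : Fin d2 → ℝ))) :=
    gm_fderiv2 hγb (ψ, lam) _ _
  rw [e1, e2, e3, e4, e5, bilin_expand, lin_expand]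
  -- now identify the coefficients
  congr 1
  · refine Finset.sum_congr rfl fun s _ => ?_
    congr 1
    · -- Jacobian entry
      have : deriv (fun t => γb ψ (Function.update lam j t) s) (lam j)
          = pd2 (fun a b => γb a b s) j ψ lam := rfl
      rw [this, pd2_eq (diff_comp_proj hγb (ψ, lam) s) j, comp_fderiv hγb]
    · congr 1
      · exact (pd_mixed_12 (F := fun c e => l c e x) hl ψ (γb ψ lam) i s).symm
      · refine Finset.sum_congr rfl fun r _ => ?_
        congr 1
        · rw [pd1_eq (diff_comp_proj hγb (ψ, lam) r) i, comp_fderiv hγb]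
        · exact (pd_mixed_22 (F := fun c e => l c e x) hl ψ (γb ψ lam) r s).symm
  · refine Finset.sum_congr rfl fun s _ => ?_
    congr 1
    exact (pd2_eq (F := fun a b => l a b x) (hl.differentiable two_ne_zero (ψ, γb ψ lam)) s).symm

lemma integral_mix {𝒳 : Type*} [MeasurableSpace 𝒳] {μ : MeasureTheory.Measure 𝒳} {d2 : ℕ}
    (A : Fin d2 → 𝒳 → ℝ) (B : Fin d2 → Fin d2 → 𝒳 → ℝ) (S : Fin d2 → 𝒳 → ℝ) (ρ : 𝒳 → ℝ)
    (J k cc : Fin d2 → ℝ)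
    (hA : ∀ s, Integrable (fun x => A s x * ρ x) μ)
    (hB : ∀ r s, Integrable (fun x => B r s x * ρ x) μ)
    (hS : ∀ s, Integrable (fun x => S s x * ρ x) μ)
    (hS0 : ∀ s, ∫ x, S s x * ρ x ∂μ = 0) :
    ∫ x, (∑ s, J s * (A s x + ∑ r, cc r * B r s x) + ∑ s, k s * S s x) * ρ x ∂μ
      = ∑ s, J s * ((∫ x, A s x * ρ x ∂μ) + ∑ r, cc r * ∫ x, B r s x * ρ x ∂μ) := by
  have h1 : ∀ s, Integrable
      (fun x => J s * (A s x * ρ x + ∑ r, cc r * (B r s x * ρ x))) μ := fun s =>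
    ((hA s).add (integrable_finset_sum _ fun r _ => (hB r s).const_mul _)).const_mul _
  have h2 : ∀ s, Integrable (fun x => k s * (S s x * ρ x)) μ := fun s =>
    (hS s).const_mul _
  have heq : (fun x => (∑ s, J s * (A s x + ∑ r, cc r * B r s x) + ∑ s, k s * S s x) * ρ x)
      = fun x => (∑ s, J s * (A s x * ρ x + ∑ r, cc r * (B r s x * ρ x)))
          + ∑ s, k s * (S s x * ρ x) := by
    funext x
    simp only [add_mul, Finset.sum_mul, mul_assoc]
  rw [heq, integral_add (integrable_finset_sum _ fun s _ => h1 s)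
      (integrable_finset_sum _ fun s _ => h2 s),
    integral_finset_sum _ (fun s _ => h1 s), integral_finset_sum _ (fun s _ => h2 s)]
  have h3 : ∀ s : Fin d2, ∫ x, (A s x * ρ x + ∑ r, cc r * (B r s x * ρ x)) ∂μ
      = (∫ x, A s x * ρ x ∂μ) + ∑ r, cc r * ∫ x, B r s x * ρ x ∂μ := by
    intro s
    rw [integral_add (hA s) (integrable_finset_sum _ fun r _ => (hB r s).const_mul _),
      integral_finset_sum _ (fun r _ => (hB r s).const_mul _)]
    simp only [integral_const_mul]
  simp only [integral_const_mul, hS0, mul_zero, Finset.sum_const_zero, add_zero]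
  exact Finset.sum_congr rfl fun s _ => by rw [h3 s]

lemma matrix_cancel {n m : ℕ} (M : Matrix (Fin m) (Fin n) ℝ) (J : Matrix (Fin n) (Fin n) ℝ)
    (hJ : J.det ≠ 0) : (∀ i j, ∑ s, M i s * J s j = 0) ↔ ∀ i s, M i s = 0 := by
  constructor
  · intro h i s
    have hMJ : M * J = 0 := by
      ext i j
      simpa [Matrix.mul_apply] using h i j
    have hM : M = 0 := by
      have h2 := congrArg (· * J⁻¹) hMJ
      simpa [Matrix.mul_assoc, Matrix.mul_nonsing_inv J (isUnit_iff_ne_zero.mpr hJ)] using h2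
    exact congrFun (congrFun hM i) s
  · intro h i j
    simp [h]

lemma final_alg {d1 d2 : ℕ} (EA cc : Fin d1 → Fin d2 → ℝ) (EB J : Fin d2 → Fin d2 → ℝ)
    (LHS : Fin d1 → Fin d2 → ℝ)
    (hdet : (Matrix.of J).det ≠ 0)
    (hkey : ∀ i j, LHS i j = ∑ s, J s j * (EA i s + ∑ r, cc i r * EB r s)) :
    (∀ i j, LHS i j = 0)
      ↔ (∀ i s, ∑ r, (-(EB r s)) * cc i r = -(-(EA i s))) := by
  have hmc := matrix_cancel
    (Matrix.of fun i s => EA i s + ∑ r, cc i r * EB r s) (Matrix.of J) hdet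
  simp only [Matrix.of_apply] at hmc
  have hcancel : ∀ i s, ∑ r, (-(EB r s)) * cc i r + ∑ r, cc i r * EB r s = 0 := by
    intro i s
    rw [← Finset.sum_add_distrib]
    exact Finset.sum_eq_zero fun r _ => by ring
  constructor
  · intro h i s
    have h0 : ∀ i j, ∑ s, (EA i s + ∑ r, cc i r * EB r s) * J s j = 0 := by
      intro i j
      rw [← h i j, hkey i j]
      exact Finset.sum_congr rfl fun s _ => mul_comm _ _
    have hM := hmc.mp h0 i s
    rw [neg_neg]
    have := hcancel i s
    linarith
  · intro h i j
    rw [hkey i j]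
    refine Finset.sum_eq_zero fun s _ => ?_
    have h1 := h i s
    rw [neg_neg] at h1
    have h2 := hcancel i s
    have hz : EA i s + ∑ r, cc i r * EB r s = 0 := by linarith
    rw [hz, mul_zero]

/-- **Orthogonality condition for multiple parameters of interest (Theorem 1).**
Let `exp (l ψ γ ·)` be a parametric family of densities with respect to a σ-finite
measure `μ`, twice continuously differentiable in the parameters `(ψ, γ)`, and let
`γb` be a twice continuously differentiable reparameterization `γ = γb ψ λ` whose
Jacobian in `λ` is everywhere invertible, so that `l̄(ψ, λ; x) = l(ψ, γb ψ λ; x)`.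
Assume the `γ`-scores have zero mean and the first and second partial derivatives of
`l` and `l̄` in the parameters are integrable under the corresponding density.
Then at any fixed `(ψ, λ)` with `γ = γb ψ λ`, the orthogonality condition
`E_{ψ,γ}[∂²l̄/∂ψ_i ∂λ_j] = 0` for all `i, j` holds if and only if
`∑_r I_{γ_r,γ_s} ∂γb_r/∂ψ_i = −I_{ψ_i,γ_s}` for all `i, s`, where
`I_{γ_r,γ_s} = −E_{ψ,γ}[∂²l/∂γ_r ∂γ_s]` and `I_{ψ_i,γ_s} = −E_{ψ,γ}[∂²l/∂ψ_i ∂γ_s]`. -/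
theorem stmt0 {d1 d2 : ℕ} (hd1 : 1 ≤ d1) (hd2 : 1 ≤ d2)
    {𝒳 : Type*} [MeasurableSpace 𝒳] (μ : Measure 𝒳) [SigmaFinite μ]
    (l : (Fin d1 → ℝ) → (Fin d2 → ℝ) → 𝒳 → ℝ)
    (hmeas : ∀ ψ γ, Measurable (fun x => l ψ γ x))
    (hdens : ∀ ψ γ, ∫ x, Real.exp (l ψ γ x) ∂μ = 1)
    (hC2 : ∀ x, ContDiff ℝ 2 (fun q : (Fin d1 → ℝ) × (Fin d2 → ℝ) => l q.1 q.2 x))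
    (γb : (Fin d1 → ℝ) → (Fin d2 → ℝ) → (Fin d2 → ℝ))
    (hγbC2 : ContDiff ℝ 2 (fun q : (Fin d1 → ℝ) × (Fin d2 → ℝ) => γb q.1 q.2))
    (hJac : ∀ ψ lam,
      (Matrix.of fun s j : Fin d2 =>
        deriv (fun t => γb ψ (Function.update lam j t) s) (lam j)).det ≠ 0)
    -- the γ-scores have zero mean at every parameter value
    (hscore : ∀ ψ lam (r : Fin d2),
      ∫ x, pd2 (fun a b => l a b x) r ψ (γb ψ lam) *
        Real.exp (l ψ (γb ψ lam) x) ∂μ = 0)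
    -- first partial derivatives of l are integrable under the corresponding density
    (hint1 : ∀ ψ γ (i : Fin d1),
      Integrable (fun x => pd1 (fun a b => l a b x) i ψ γ * Real.exp (l ψ γ x)) μ)
    (hint2 : ∀ ψ γ (r : Fin d2),
      Integrable (fun x => pd2 (fun a b => l a b x) r ψ γ * Real.exp (l ψ γ x)) μ)
    -- second partial derivatives of l are integrable under the corresponding density
    (hint3 : ∀ ψ γ (i : Fin d1) (s : Fin d2),
      Integrable (fun x =>
        pd1 (fun a b => pd2 (fun c e => l c e x) s a b) i ψ γ *
          Real.exp (l ψ γ x)) μ)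
    (hint4 : ∀ ψ γ (r s : Fin d2),
      Integrable (fun x =>
        pd2 (fun a b => pd2 (fun c e => l c e x) s a b) r ψ γ *
          Real.exp (l ψ γ x)) μ)
    (hint5 : ∀ ψ γ (i i' : Fin d1),
      Integrable (fun x =>
        pd1 (fun a b => pd1 (fun c e => l c e x) i' a b) i ψ γ *
          Real.exp (l ψ γ x)) μ)
    -- first partial derivatives of l̄ are integrable under the corresponding density
    (hint6 : ∀ ψ lam (i : Fin d1),
      Integrable (fun x => pd1 (fun a b => l a (γb a b) x) i ψ lam *
        Real.exp (l ψ (γb ψ lam) x)) μ)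
    (hint7 : ∀ ψ lam (j : Fin d2),
      Integrable (fun x => pd2 (fun a b => l a (γb a b) x) j ψ lam *
        Real.exp (l ψ (γb ψ lam) x)) μ)
    -- second partial derivatives of l̄ are integrable under the corresponding density
    (hint8 : ∀ ψ lam (i : Fin d1) (j : Fin d2),
      Integrable (fun x =>
        pd1 (fun a b => pd2 (fun c e => l c (γb c e) x) j a b) i ψ lam *
          Real.exp (l ψ (γb ψ lam) x)) μ)
    (hint9 : ∀ ψ lam (j j' : Fin d2),
      Integrable (fun x =>
        pd2 (fun a b => pd2 (fun c e => l c (γb c e) x) j' a b) j ψ lam *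
          Real.exp (l ψ (γb ψ lam) x)) μ)
    (hint10 : ∀ ψ lam (i i' : Fin d1),
      Integrable (fun x =>
        pd1 (fun a b => pd1 (fun c e => l c (γb c e) x) i' a b) i ψ lam *
          Real.exp (l ψ (γb ψ lam) x)) μ)
    -- fixed parameter point
    (ψ : Fin d1 → ℝ) (lam : Fin d2 → ℝ) (γ : Fin d2 → ℝ) (hγ : γ = γb ψ lam) :
    (∀ (i : Fin d1) (j : Fin d2),
      ∫ x, pd1 (fun a b => pd2 (fun c e => l c (γb c e) x) j a b) i ψ lam *
        Real.exp (l ψ γ x) ∂μ = 0)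
    ↔
    (∀ (i : Fin d1) (s : Fin d2),
      ∑ r : Fin d2,
        (-(∫ x, pd2 (fun a b => pd2 (fun c e => l c e x) s a b) r ψ γ *
              Real.exp (l ψ γ x) ∂μ)) *
          pd1 (fun a b => γb a b r) i ψ lam
      = -(-(∫ x, pd1 (fun a b => pd2 (fun c e => l c e x) s a b) i ψ γ *
              Real.exp (l ψ γ x) ∂μ))) := by
  subst hγ
  have key : ∀ (i : Fin d1) (j : Fin d2),
      (∫ x, pd1 (fun a b => pd2 (fun c e => l c (γb c e) x) j a b) i ψ lam *
        Real.exp (l ψ (γb ψ lam) x) ∂μ)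
      = ∑ s, deriv (fun t => γb ψ (Function.update lam j t) s) (lam j) *
          ((∫ x, pd1 (fun a b => pd2 (fun c e => l c e x) s a b) i ψ (γb ψ lam) *
              Real.exp (l ψ (γb ψ lam) x) ∂μ)
            + ∑ r, pd1 (fun a b => γb a b r) i ψ lam *
                ∫ x, pd2 (fun a b => pd2 (fun c e => l c e x) s a b) r ψ (γb ψ lam) *
                  Real.exp (l ψ (γb ψ lam) x) ∂μ) := by
    intro i j
    have hcong : (fun x => pd1 (fun a b => pd2 (fun c e => l c (γb c e) x) j a b) i ψ lam *
        Real.exp (l ψ (γb ψ lam) x))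
        = fun x => (∑ s, deriv (fun t => γb ψ (Function.update lam j t) s) (lam j) *
            (pd1 (fun a b => pd2 (fun c e => l c e x) s a b) i ψ (γb ψ lam)
              + ∑ r, pd1 (fun a b => γb a b r) i ψ lam *
                  pd2 (fun a b => pd2 (fun c e => l c e x) s a b) r ψ (γb ψ lam))
            + ∑ s, (fderiv ℝ (fderiv ℝ (fun q : (Fin d1 → ℝ) × (Fin d2 → ℝ) => γb q.1 q.2))
                (ψ, lam) ((Pi.single i 1 : Fin d1 → ℝ), (0 : Fin d2 → ℝ))
                ((0 : Fin d1 → ℝ), (Pi.single j 1 : Fin d2 → ℝ)) s) *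
              pd2 (fun a b => l a b x) s ψ (γb ψ lam)) *
          Real.exp (l ψ (γb ψ lam) x) :=
      funext fun x => by rw [pointwise l γb hγbC2 x (hC2 x) ψ lam i j]
    rw [hcong]
    exact integral_mix
      (fun s x => pd1 (fun a b => pd2 (fun c e => l c e x) s a b) i ψ (γb ψ lam))
      (fun r s x => pd2 (fun a b => pd2 (fun c e => l c e x) s a b) r ψ (γb ψ lam))
      (fun s x => pd2 (fun a b => l a b x) s ψ (γb ψ lam))
      (fun x => Real.exp (l ψ (γb ψ lam) x))
      (fun s => deriv (fun t => γb ψ (Function.update lam j t) s) (lam j))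
      (fun s => fderiv ℝ (fderiv ℝ (fun q : (Fin d1 → ℝ) × (Fin d2 → ℝ) => γb q.1 q.2))
          (ψ, lam) ((Pi.single i 1 : Fin d1 → ℝ), (0 : Fin d2 → ℝ))
          ((0 : Fin d1 → ℝ), (Pi.single j 1 : Fin d2 → ℝ)) s)
      (fun r => pd1 (fun a b => γb a b r) i ψ lam)
      (fun s => hint3 ψ (γb ψ lam) i s)
      (fun r s => hint4 ψ (γb ψ lam) r s)
      (fun s => hint2 ψ (γb ψ lam) s)
      (fun s => hscore ψ lam s)
  exact final_alg
    (fun i s => ∫ x, pd1 (fun a b => pd2 (fun c e => l c e x) s a b) i ψ (γb ψ lam) *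
        Real.exp (l ψ (γb ψ lam) x) ∂μ)
    (fun i r => pd1 (fun a b => γb a b r) i ψ lam)
    (fun r s => ∫ x, pd2 (fun a b => pd2 (fun c e => l c e x) s a b) r ψ (γb ψ lam) *
        Real.exp (l ψ (γb ψ lam) x) ∂μ)
    (fun s j => deriv (fun t => γb ψ (Function.update lam j t) s) (lam j))
    (fun i j => ∫ x, pd1 (fun a b => pd2 (fun c e => l c (γb c e) x) j a b) i ψ lam *
        Real.exp (l ψ (γb ψ lam) x) ∂μ)
    (hJac ψ lam) key
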